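/- Let (Ω, P, π) be a finite irreducible lazy reversible Markov chain and Z ⊂ Ω. Then for all s ≥ 0, P_{π_Z}^s(Z) ≥ π(Z), where π_Z is π conditioned on Z and P_{π_Z}^s(Z) = Σ_{z,z'∈Z} π_Z(z) P^s(z,z'). -/

import Mathlib

open Finset

/-- For a finite irreducible lazy reversible Markov chain and
`Z ⊂ Ω`, for all `s ≥ 0`, `P_{π_Z}^s(Z) ≥ π(Z)`, where `π_Z` is `π` conditioned
on `Z`, i.e. `Σ_{z,z'∈Z} (π(z)/π(Z))·P^s(z,z') ≥ π(Z)`. -/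
theorem stmt5 {Ω : Type*} [Fintype Ω] [Nonempty Ω] [DecidableEq Ω]
    (P : Matrix Ω Ω ℝ) (π : Ω → ℝ)
    (hP0 : ∀ x y, 0 ≤ P x y) (hP1 : ∀ x, ∑ y, P x y = 1)
    (hπ0 : ∀ x, 0 < π x) (hπ1 : ∑ x, π x = 1)
    (hrev : ∀ x y, π x * P x y = π y * P y x)
    (hirr : ∀ x y, ∃ t : ℕ, 0 < (P ^ t) x y)
    (hlazy : ∀ x, (1 : ℝ) / 2 ≤ P x x)
    (Z : Finset Ω) (hZ : Z.Nonempty) (s : ℕ) :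
    ∑ z ∈ Z, ∑ z' ∈ Z, (π z / ∑ w ∈ Z, π w) * (P ^ s) z z' ≥ ∑ w ∈ Z, π w := by
  set c : ℝ := ∑ w ∈ Z, π w with hc
  have hcpos : 0 < c := Finset.sum_pos (fun w _ => hπ0 w) hZ
  -- row sums of powers are 1
  have hrow : ∀ t : ℕ, ∀ x, ∑ y, (P ^ t) x y = 1 := by
    intro t
    induction t with
    | zero => intro x; simp [Matrix.one_apply]
    | succ n ih =>
      intro x
      rw [pow_succ]
      simp only [Matrix.mul_apply]
      rw [Finset.sum_comm]
      calc ∑ z, ∑ y, (P ^ n) x z * P z y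
          = ∑ z, (P ^ n) x z * ∑ y, P z y := by
            simp [Finset.mul_sum]
        _ = 1 := by simp [hP1, ih]
  -- reversibility for powers
  have hrevt : ∀ t : ℕ, ∀ x y, π x * (P ^ t) x y = π y * (P ^ t) y x := by
    intro t
    induction t with
    | zero =>
      intro x y
      by_cases h : x = y <;> simp [Matrix.one_apply, h, Ne.symm]
    | succ n ih =>
      intro x y
      conv_lhs => rw [pow_succ]
      conv_rhs => rw [pow_succ']
      simp only [Matrix.mul_apply]
      rw [Finset.mul_sum, Finset.mul_sum]
      apply Finset.sum_congr rfl
      intro z _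
      calc π x * ((P ^ n) x z * P z y)
          = (π x * (P ^ n) x z) * P z y := by ring
        _ = (π z * (P ^ n) z x) * P z y := by rw [ih]
        _ = (π z * P z y) * (P ^ n) z x := by ring
        _ = (π y * P y z) * (P ^ n) z x := by rw [hrev]
        _ = π y * (P y z * (P ^ n) z x) := by ring
  -- the lazy quadratic form for P itself is nonnegative
  have hQ1 : ∀ f : Ω → ℝ, 0 ≤ ∑ x, ∑ y, π x * P x y * f x * f y := by
    intro f
    set R : Ω → Ω → ℝ := fun x y => 2 * P x y - if x = y then 1 else 0 with hR
    have hRdef : ∀ x y, R x y = 2 * P x y - if x = y then 1 else 0 := fun _ _ => rfl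
    have hRpos : ∀ x y, 0 ≤ R x y := by
      intro x y
      rw [hRdef]
      by_cases h : x = y
      · subst h
        rw [if_pos rfl]
        linarith [hlazy x]
      · rw [if_neg h]
        linarith [hP0 x y]
    have hRrow : ∀ x, ∑ y, R x y = 1 := by
      intro x
      simp only [hRdef]
      rw [Finset.sum_sub_distrib, ← Finset.mul_sum, hP1, Finset.sum_ite_eq]
      norm_num
    have hRrev : ∀ x y, π x * R x y = π y * R y x := by
      intro x y
      by_cases h : x = y
      · subst h; rfl
      · rw [hRdef, hRdef, if_neg h, if_neg (Ne.symm h)]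
        have := hrev x y
        nlinarith [hrev x y]
    have SA : ∑ x, ∑ y, π x * R x y * f x ^ 2 = ∑ x, π x * f x ^ 2 := by
      apply Finset.sum_congr rfl
      intro x _
      calc ∑ y, π x * R x y * f x ^ 2 = (π x * f x ^ 2) * ∑ y, R x y := by
            rw [Finset.mul_sum]; apply Finset.sum_congr rfl; intro y _; ring
        _ = π x * f x ^ 2 := by rw [hRrow]; ring
    have SC : ∑ x, ∑ y, π x * R x y * f y ^ 2 = ∑ y, π y * f y ^ 2 := by
      rw [Finset.sum_comm]
      apply Finset.sum_congr rfl
      intro y _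
      calc ∑ x, π x * R x y * f y ^ 2 = ∑ x, π y * R y x * f y ^ 2 := by
            apply Finset.sum_congr rfl; intro x _; rw [show π x * R x y * f y ^ 2
              = (π x * R x y) * f y ^ 2 by ring, hRrev]
        _ = (π y * f y ^ 2) * ∑ x, R y x := by
            rw [Finset.mul_sum]; apply Finset.sum_congr rfl; intro x _; ring
        _ = π y * f y ^ 2 := by rw [hRrow]; ring
    have SB : ∑ x, ∑ y, π x * R x y * (f x * f y)
        = 2 * (∑ x, ∑ y, π x * P x y * f x * f y) - ∑ x, π x * f x ^ 2 := by
      have hx : ∀ x : Ω, ∑ y, π x * R x y * (f x * f y)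
          = (∑ y, 2 * (π x * P x y * f x * f y)) - π x * f x ^ 2 := by
        intro x
        have e : ∀ y, π x * R x y * (f x * f y)
            = 2 * (π x * P x y * f x * f y) - (if x = y then π x * f x ^ 2 else 0) := by
          intro y
          rw [hRdef]
          by_cases h : x = y
          · subst h; rw [if_pos rfl, if_pos rfl]; ring
          · rw [if_neg h, if_neg h]; ring
        rw [Finset.sum_congr rfl (fun y _ => e y), Finset.sum_sub_distrib,
          Finset.sum_ite_eq]
        simp
      calc ∑ x, ∑ y, π x * R x y * (f x * f y)
          = ∑ x, ((∑ y, 2 * (π x * P x y * f x * f y)) - π x * f x ^ 2) :=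
            Finset.sum_congr rfl (fun x _ => hx x)
        _ = 2 * (∑ x, ∑ y, π x * P x y * f x * f y) - ∑ x, π x * f x ^ 2 := by
            rw [Finset.sum_sub_distrib, Finset.mul_sum]
            congr 1
            exact Finset.sum_congr rfl fun x _ => by rw [Finset.mul_sum]
    have key : ∑ x, ∑ y, π x * R x y * (f x + f y) ^ 2
        = 4 * ∑ x, ∑ y, π x * P x y * f x * f y := by
      have expand : ∀ x y : Ω, π x * R x y * (f x + f y) ^ 2
          = π x * R x y * f x ^ 2 + 2 * (π x * R x y * (f x * f y))
            + π x * R x y * f y ^ 2 := by intro x y; ring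
      calc ∑ x, ∑ y, π x * R x y * (f x + f y) ^ 2
          = (∑ x, ∑ y, π x * R x y * f x ^ 2)
            + 2 * (∑ x, ∑ y, π x * R x y * (f x * f y))
            + ∑ x, ∑ y, π x * R x y * f y ^ 2 := by
            simp only [expand, Finset.sum_add_distrib, Finset.mul_sum]
        _ = 4 * ∑ x, ∑ y, π x * P x y * f x * f y := by
            rw [SA, SB, SC]; ring
    have pos : 0 ≤ ∑ x, ∑ y, π x * R x y * (f x + f y) ^ 2 := by
      apply Finset.sum_nonneg; intro x _
      apply Finset.sum_nonneg; intro y _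
      have h1 := mul_nonneg (hπ0 x).le (hRpos x y)
      positivity
    rw [key] at pos
    linarith
  -- conversion between matrix quadratic form and double sums
  have hconv : ∀ (t : ℕ) (f : Ω → ℝ),
      dotProduct f ((Matrix.diagonal π * P ^ t).mulVec f)
        = ∑ x, ∑ y, π x * (P ^ t) x y * f x * f y := by
    intro t f
    simp only [dotProduct, Matrix.mulVec, Matrix.diagonal_mul, Finset.mul_sum]
    apply Finset.sum_congr rfl; intro x _
    apply Finset.sum_congr rfl; intro y _
    ring
  have hsymm : P.transpose * Matrix.diagonal π = Matrix.diagonal π * P := by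
    ext x y
    rw [Matrix.mul_diagonal, Matrix.diagonal_mul, Matrix.transpose_apply, mul_comm]
    exact (hrev x y).symm
  have hmat : ∀ t : ℕ,
      Matrix.diagonal π * P ^ (t + 2) = P.transpose * (Matrix.diagonal π * P ^ t) * P := by
    intro t
    have h1 : P ^ (t + 2) = P * P ^ t * P := by
      rw [pow_succ, pow_succ']
    rw [h1, ← mul_assoc, ← mul_assoc, ← hsymm, mul_assoc P.transpose, ← mul_assoc]
  -- the quadratic form of every power is nonnegative
  have hQ : ∀ t : ℕ, ∀ f : Ω → ℝ, 0 ≤ ∑ x, ∑ y, π x * (P ^ t) x y * f x * f y := by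
    intro t
    induction t using Nat.twoStepInduction with
    | zero =>
      intro f
      have h1 : ∀ x : Ω, ∑ y, π x * (P ^ 0) x y * f x * f y = π x * (f x * f x) := by
        intro x
        simp [Matrix.one_apply, ite_mul, mul_ite, Finset.sum_ite_eq, mul_assoc]
      rw [Finset.sum_congr rfl fun x _ => h1 x]
      exact Finset.sum_nonneg fun x _ => mul_nonneg (hπ0 x).le (mul_self_nonneg _)
    | one =>
      intro f
      simpa using hQ1 f
    | more n ih _ =>
      intro f
      have e : ∑ x, ∑ y, π x * (P ^ (n + 2)) x y * f x * f y
          = ∑ x, ∑ y, π x * (P ^ n) x y * (P.mulVec f) x * (P.mulVec f) y := by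
        have e2 : (P.transpose * (Matrix.diagonal π * P ^ n) * P).mulVec f
            = P.transpose.mulVec ((Matrix.diagonal π * P ^ n).mulVec (P.mulVec f)) := by
          rw [Matrix.mulVec_mulVec, Matrix.mulVec_mulVec, mul_assoc]
        rw [← hconv, ← hconv, hmat n, e2, Matrix.dotProduct_mulVec,
          Matrix.vecMul_transpose]
      rw [e]
      exact ih (P.mulVec f)
  -- apply with the centered indicator of Z
  have h0 := hQ s (fun x => (if x ∈ Z then 1 else 0) - c)
  set A : ℝ := ∑ z ∈ Z, ∑ z' ∈ Z, π z * (P ^ s) z z' with hA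
  have hS1 : ∑ x, ∑ y, π x * (P ^ s) x y * (if x ∈ Z then (1:ℝ) else 0)
        * (if y ∈ Z then (1:ℝ) else 0) = A := by
    rw [hA]
    have e : ∀ x y : Ω, π x * (P ^ s) x y * (if x ∈ Z then (1:ℝ) else 0)
        * (if y ∈ Z then (1:ℝ) else 0)
        = if x ∈ Z then (if y ∈ Z then π x * (P ^ s) x y else 0) else 0 := by
      intro x y
      by_cases hx : x ∈ Z <;> by_cases hy : y ∈ Z <;> simp [hx, hy]
    have step2 : ∀ x : Ω, ∑ y, (if x ∈ Z then (if y ∈ Z then π x * (P ^ s) x y else 0) else 0)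
        = if x ∈ Z then (∑ y, if y ∈ Z then π x * (P ^ s) x y else 0) else 0 := by
      intro x
      by_cases hx : x ∈ Z
      · simp only [hx, if_true]
      · simp only [hx, if_false, Finset.sum_const_zero]
    calc ∑ x, ∑ y, π x * (P ^ s) x y * (if x ∈ Z then (1:ℝ) else 0)
          * (if y ∈ Z then (1:ℝ) else 0)
        = ∑ x, ∑ y, (if x ∈ Z then (if y ∈ Z then π x * (P ^ s) x y else 0) else 0) :=
          Finset.sum_congr rfl fun x _ => Finset.sum_congr rfl fun y _ => e x y
      _ = ∑ x, if x ∈ Z then (∑ y, if y ∈ Z then π x * (P ^ s) x y else 0) else 0 :=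
          Finset.sum_congr rfl fun x _ => step2 x
      _ = ∑ z ∈ Z, ∑ z' ∈ Z, π z * (P ^ s) z z' := by
          rw [Finset.sum_ite_mem, Finset.univ_inter]
          exact Finset.sum_congr rfl fun z _ => by
            rw [Finset.sum_ite_mem, Finset.univ_inter]
  have hS2 : ∑ x, ∑ y, π x * (P ^ s) x y * (if x ∈ Z then (1:ℝ) else 0) = c := by
    have e : ∀ x : Ω, ∑ y, π x * (P ^ s) x y * (if x ∈ Z then (1:ℝ) else 0)
        = if x ∈ Z then π x else 0 := by
      intro x
      by_cases hx : x ∈ Z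
      · simp only [hx, if_true, mul_one]
        rw [← Finset.mul_sum, hrow s x, mul_one]
      · simp [hx]
    rw [Finset.sum_congr rfl fun x _ => e x, Finset.sum_ite_mem, Finset.univ_inter]
  have hS3 : ∑ x, ∑ y, π x * (P ^ s) x y * (if y ∈ Z then (1:ℝ) else 0) = c := by
    rw [Finset.sum_comm]
    have e : ∀ y : Ω, ∑ x, π x * (P ^ s) x y * (if y ∈ Z then (1:ℝ) else 0)
        = if y ∈ Z then π y else 0 := by
      intro y
      by_cases hy : y ∈ Z
      · simp only [hy, if_true, mul_one]
        calc ∑ x, π x * (P ^ s) x y = ∑ x, π y * (P ^ s) y x :=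
              Finset.sum_congr rfl fun x _ => hrevt s x y
          _ = π y := by rw [← Finset.mul_sum, hrow s y, mul_one]
      · simp [hy]
    rw [Finset.sum_congr rfl fun y _ => e y, Finset.sum_ite_mem, Finset.univ_inter]
  have hS4 : ∑ x, ∑ y, π x * (P ^ s) x y = 1 := by
    calc ∑ x, ∑ y, π x * (P ^ s) x y = ∑ x, π x * ∑ y, (P ^ s) x y := by
          simp [Finset.mul_sum]
      _ = 1 := by simp [hrow s, hπ1]
  have expand : ∑ x, ∑ y, π x * (P ^ s) x y * ((if x ∈ Z then (1:ℝ) else 0) - c)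
      * ((if y ∈ Z then (1:ℝ) else 0) - c) = A - c ^ 2 := by
    have e1 : ∀ x y : Ω, π x * (P ^ s) x y * ((if x ∈ Z then (1:ℝ) else 0) - c)
        * ((if y ∈ Z then (1:ℝ) else 0) - c)
        = π x * (P ^ s) x y * (if x ∈ Z then (1:ℝ) else 0) * (if y ∈ Z then (1:ℝ) else 0)
          - c * (π x * (P ^ s) x y * (if x ∈ Z then (1:ℝ) else 0))
          - c * (π x * (P ^ s) x y * (if y ∈ Z then (1:ℝ) else 0))
          + c ^ 2 * (π x * (P ^ s) x y) := by
      intro x y; ring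
    calc ∑ x, ∑ y, π x * (P ^ s) x y * ((if x ∈ Z then (1:ℝ) else 0) - c)
          * ((if y ∈ Z then (1:ℝ) else 0) - c)
        = (∑ x, ∑ y, π x * (P ^ s) x y * (if x ∈ Z then (1:ℝ) else 0)
            * (if y ∈ Z then (1:ℝ) else 0))
          - c * (∑ x, ∑ y, π x * (P ^ s) x y * (if x ∈ Z then (1:ℝ) else 0))
          - c * (∑ x, ∑ y, π x * (P ^ s) x y * (if y ∈ Z then (1:ℝ) else 0))
          + c ^ 2 * (∑ x, ∑ y, π x * (P ^ s) x y) := by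
          simp only [e1, Finset.sum_add_distrib, Finset.sum_sub_distrib, Finset.mul_sum]
      _ = A - c ^ 2 := by rw [hS1, hS2, hS3, hS4]; ring
  rw [expand] at h0
  have hAc : c * (∑ z ∈ Z, ∑ z' ∈ Z, (π z / c) * (P ^ s) z z') = A := by
    rw [hA, Finset.mul_sum]
    apply Finset.sum_congr rfl; intro z _
    rw [Finset.mul_sum]
    apply Finset.sum_congr rfl; intro z' _
    field_simp
  rw [ge_iff_le, ← mul_le_mul_iff_right₀ hcpos, hAc]
  nlinarith [h0]
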